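/- Let α ∈ ℝ with α ≠ 0 and α² ≠ 1. On the open set U = {(x,y,z,p,q) ∈ ℝ⁵ : y + α ≠ 0}, define the rolling Pfaffian system θ₁ = dy + y dz − (y² + 1)(dp − p dz) − exp(αx) dq, θ₂ = (1 − y²)(dp − p dz) + dy + y dz + dx, θ₃ = −2y(dp − p dz) + dz + α exp(αx) dq, and define the map Φ : U → ℝ⁵ by Φ(x,y,z,p,q) = (2·exp(z − αx), q + (2p − 1/α)·exp(−αx), exp(z)·(y + 1/α), exp(−z)·p, 1/(4·exp(2z − αx)·(y + α))). On ℝ⁵ with coordinates (X,Y,Z,P,Q), define the Monge normal form 1-forms ω₁ = dY − P dX, ω₂ = dP − Q dX, ω₃ = dZ − F dX, where F(X,Y,Z,P,Q) = Q·Z² + (1/(α² − 1))·(Q·Z² − Z/X + 1/(4·Q·X²)). Then for every a ∈ U and every v ∈ ℝ⁵: θ₁(a)(v) = 0 and θ₂(a)(v) = 0 and θ₃(a)(v) = 0 if and only if ω₁(Φ(a))((fderiv ℝ Φ a)(v)) = 0 and ω₂(Φ(a))((fderiv ℝ Φ a)(v)) = 0 and ω₃(Φ(a))((fderiv ℝ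 Φ a)(v)) = 0. (Theorem: the rolling Pfaffian system can be brought to the Monge normal form dz = q z² + (1/(α²−1))(√q z − 1/(2√q x))² by an explicit change of coordinates.) -/

import Mathlib

/-!
STATEMENT 7: the rolling Pfaffian system {θ₁, θ₂, θ₃} on U = {y + α ≠ 0} ⊆ ℝ⁵ is
brought to the Monge normal form {dY − P dX, dP − Q dX, dZ − F dX},
F = QZ² + (1/(α²−1))(QZ² − Z/X + 1/(4QX²)), by the explicit change of
coordinates Φ.
-/

noncomputable section

open Real

/-- coordinate differentials on ℝ⁵ -/
def dc (i : Fin 5) : (Fin 5 → ℝ) →L[ℝ] ℝ := ContinuousLinearMap.proj i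

/-- θ₁ = dy + y dz − (y² + 1)(dp − p dz) − exp(αx) dq -/
def θ₁ (α : ℝ) : (Fin 5 → ℝ) → ((Fin 5 → ℝ) →L[ℝ] ℝ) :=
  fun a => dc 1 + a 1 • dc 2 - ((a 1)^2 + 1) • (dc 3 - a 3 • dc 2) - exp (α * a 0) • dc 4

/-- θ₂ = (1 − y²)(dp − p dz) + dy + y dz + dx -/
def θ₂ : (Fin 5 → ℝ) → ((Fin 5 → ℝ) →L[ℝ] ℝ) :=
  fun a => (1 - (a 1)^2) • (dc 3 - a 3 • dc 2) + dc 1 + a 1 • dc 2 + dc 0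

/-- θ₃ = −2y(dp − p dz) + dz + α exp(αx) dq -/
def θ₃ (α : ℝ) : (Fin 5 → ℝ) → ((Fin 5 → ℝ) →L[ℝ] ℝ) :=
  fun a => (-2 * a 1) • (dc 3 - a 3 • dc 2) + dc 2 + (α * exp (α * a 0)) • dc 4

/-- the change of coordinates Φ -/
def Φ (α : ℝ) : (Fin 5 → ℝ) → (Fin 5 → ℝ) :=
  fun a => ![2 * exp (a 2 - α * a 0),
             a 4 + (2 * a 3 - 1/α) * exp (-(α * a 0)),
             exp (a 2) * (a 1 + 1/α),
             exp (-(a 2)) * a 3,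
             1 / (4 * exp (2 * a 2 - α * a 0) * (a 1 + α))]

/-- F(X,Y,Z,P,Q) = QZ² + (1/(α²−1))(QZ² − Z/X + 1/(4QX²)) -/
def F (α : ℝ) (b : Fin 5 → ℝ) : ℝ :=
  b 4 * (b 2)^2 + (1/(α^2 - 1)) * (b 4 * (b 2)^2 - b 2 / b 0 + 1/(4 * b 4 * (b 0)^2))

/-- ω₁ = dY − P dX -/
def ω₁ : (Fin 5 → ℝ) → ((Fin 5 → ℝ) →L[ℝ] ℝ) := fun b => dc 1 - b 3 • dc 0

/-- ω₂ = dP − Q dX -/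
def ω₂ : (Fin 5 → ℝ) → ((Fin 5 → ℝ) →L[ℝ] ℝ) := fun b => dc 3 - b 4 • dc 0

/-- ω₃ = dZ − F dX -/
def ω₃ (α : ℝ) : (Fin 5 → ℝ) → ((Fin 5 → ℝ) →L[ℝ] ℝ) := fun b => dc 2 - F α b • dc 0

set_option maxHeartbeats 1000000 in
lemma hΦ (α : ℝ) (a : Fin 5 → ℝ) (ha : a 1 + α ≠ 0) :
    HasFDerivAt (Φ α) (ContinuousLinearMap.pi
      ![ (2 * exp (a 2 - α * a 0)) • dc 2 + (-(2 * α * exp (a 2 - α * a 0))) • dc 0,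
         dc 4 + (2 * exp (-(α * a 0))) • dc 3 + (-(α * (2 * a 3 - 1/α) * exp (-(α * a 0)))) • dc 0,
         (exp (a 2) * (a 1 + 1/α)) • dc 2 + exp (a 2) • dc 1,
         exp (-(a 2)) • dc 3 + (-(exp (-(a 2)) * a 3)) • dc 2,
         (α * (1 / (4 * exp (2 * a 2 - α * a 0) * (a 1 + α)))) • dc 0
           + (-(1 / (4 * exp (2 * a 2 - α * a 0) * (a 1 + α)^2))) • dc 1
           + (-(2 * (1 / (4 * exp (2 * a 2 - α * a 0) * (a 1 + α))))) • dc 2 ]) a := by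
  have hg : (4 * exp (2 * a 2 - α * a 0) * (a 1 + α)) ≠ 0 :=
    mul_ne_zero (mul_ne_zero four_ne_zero (exp_ne_zero _)) ha
  refine hasFDerivAt_pi'.2 fun i => ?_
  fin_cases i <;>
    simp only [Φ, Matrix.cons_val_zero, Matrix.cons_val_one, Matrix.head_cons,
      Matrix.cons_val_two, Matrix.tail_cons, Matrix.cons_val_three, Matrix.cons_val_four,
      ContinuousLinearMap.proj_pi, Fin.isValue]
  · exact ((((hasFDerivAt_apply 2 a).sub ((hasFDerivAt_apply 0 a).const_mul α)).exp).const_mul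
      2).congr_fderiv (by ext v; simp [dc]; ring)
  · exact ((hasFDerivAt_apply 4 a).add ((((hasFDerivAt_apply 3 a).const_mul 2).sub_const
      (1/α)).mul (((hasFDerivAt_apply 0 a).const_mul α).neg.exp))).congr_fderiv
      (by ext v; simp [dc]; ring)
  · exact ((hasFDerivAt_apply 2 a).exp.mul ((hasFDerivAt_apply 1 a).add_const
      (1/α))).congr_fderiv (by ext v; simp [dc]; ring)
  · exact ((hasFDerivAt_apply 2 a).neg.exp.mul (hasFDerivAt_apply 3 a)).congr_fderiv
      (by ext v; simp [dc]; ring)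
  · have h1 : HasFDerivAt (fun x : Fin 5 → ℝ => 4 * exp (2 * x 2 - α * x 0) * (x 1 + α))
        ((4 * exp (2 * a 2 - α * a 0) * (a 1 + α)) • ((2:ℝ) • dc 2 - α • dc 0)
          + (4 * exp (2 * a 2 - α * a 0)) • dc 1) a := by
      exact (((((hasFDerivAt_apply 2 a).const_mul 2).sub ((hasFDerivAt_apply 0 a).const_mul
        α)).exp.const_mul 4).mul ((hasFDerivAt_apply 1 a).add_const α)).congr_fderiv
        (by ext v; simp [dc]; ring)
    have heq : (-((4 * exp (2 * a 2 - α * a 0) * (a 1 + α)) ^ 2)⁻¹ •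
        ((4 * exp (2 * a 2 - α * a 0) * (a 1 + α)) • ((2:ℝ) • dc 2 - α • dc 0)
          + (4 * exp (2 * a 2 - α * a 0)) • dc 1))
        = (α * (1 / (4 * exp (2 * a 2 - α * a 0) * (a 1 + α)))) • dc 0
           + (-(1 / (4 * exp (2 * a 2 - α * a 0) * (a 1 + α)^2))) • dc 1
           + (-(2 * (1 / (4 * exp (2 * a 2 - α * a 0) * (a 1 + α))))) • dc 2 := by
      ext v
      simp only [dc, ContinuousLinearMap.coe_smul', Pi.smul_apply,
        ContinuousLinearMap.add_apply, ContinuousLinearMap.sub_apply,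
        ContinuousLinearMap.smul_apply, ContinuousLinearMap.proj_apply, smul_eq_mul,
        ContinuousLinearMap.neg_apply]
      field_simp
      ring
    have h2 := (((hasDerivAt_inv hg).comp_hasFDerivAt a h1)).congr_fderiv heq
    simpa [one_div, Function.comp_def] using h2

set_option maxHeartbeats 1000000 in
theorem rolling_to_monge_normal_form (α : ℝ) (hα0 : α ≠ 0) (hα1 : α^2 ≠ 1) :
    ∀ a : Fin 5 → ℝ, a 1 + α ≠ 0 → ∀ v : Fin 5 → ℝ,
      (θ₁ α a v = 0 ∧ θ₂ a v = 0 ∧ θ₃ α a v = 0) ↔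
      (ω₁ (Φ α a) (fderiv ℝ (Φ α) a v) = 0 ∧
       ω₂ (Φ α a) (fderiv ℝ (Φ α) a v) = 0 ∧
       ω₃ α (Φ α a) (fderiv ℝ (Φ α) a v) = 0) := by
  intro a ha v
  have hA : α^2 - 1 ≠ 0 := sub_ne_zero.2 hα1
  rw [(hΦ α a ha).fderiv]
  simp only [θ₁, θ₂, θ₃, ω₁, ω₂, ω₃, F, Φ, dc, ContinuousLinearMap.sub_apply,
    ContinuousLinearMap.add_apply, ContinuousLinearMap.smul_apply,
    ContinuousLinearMap.proj_apply, smul_eq_mul, ContinuousLinearMap.neg_apply,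
    ContinuousLinearMap.pi_apply, Matrix.cons_val_zero, Matrix.cons_val_one, Matrix.head_cons,
    Matrix.cons_val_two, Matrix.tail_cons, Matrix.cons_val_three, Matrix.cons_val_four]
  rw [show (2 * a 2 - α * a 0) = a 2 + a 2 - α * a 0 by ring]
  rw [Real.exp_sub, Real.exp_sub, Real.exp_add, Real.exp_neg, Real.exp_neg]
  set u := rexp (α * a 0) with hu_def
  set w := rexp (a 2) with hw_def
  have hu : u ≠ 0 := exp_ne_zero _
  have hw : w ≠ 0 := exp_ne_zero _
  constructor
  · rintro ⟨h1, h2, h3⟩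
    have hA : v 0 + 2*(v 3 - a 3 * v 2) + u * v 4 = 0 := by linear_combination h2 - h1
    have hB : 2*(a 1 + α)*(v 3 - a 3 * v 2) - v 2 + α * v 0 = 0 := by
      linear_combination -α * h1 + α * h2 - h3
    have hC : α*(α*(a 1)^2 + 2*a 1 + α)*v 0 + 2*α*(a 1 + α)*v 1
        + α*((a 1)^2 + 2*α*a 1 + 1)*v 2 = 0 := by
      linear_combination α^2*(1 - (a 1)^2)*h1 + α*(α*(a 1)^2 + 2*a 1 + α)*h2 + α*(1 - (a 1)^2)*h3
    refine ⟨?_, ?_, ?_⟩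
    · field_simp
      linear_combination hA
    · field_simp
      linear_combination 2 * hB
    · field_simp
      linear_combination (4*α*(α^2-1)*w) * hC
  · rintro ⟨g1, g2, g3⟩
    field_simp at g1 g2 g3
    have hA' : (v 0 + 2*(v 3 - a 3 * v 2) + u * v 4) * (u * w) = 0 := by
      linear_combination (u*w) * g1
    have hA : v 0 + 2*(v 3 - a 3 * v 2) + u * v 4 = 0 :=
      (mul_eq_zero.mp hA').resolve_right (mul_ne_zero hu hw)
    have hB' : (2*(a 1 + α)*(v 3 - a 3 * v 2) - v 2 + α * v 0) * (2*u*w^2) = 0 := by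
      linear_combination (u*w^2) * g2
    have hB : 2*(a 1 + α)*(v 3 - a 3 * v 2) - v 2 + α * v 0 = 0 :=
      (mul_eq_zero.mp hB').resolve_right
        (mul_ne_zero (mul_ne_zero two_ne_zero hu) (pow_ne_zero 2 hw))
    have hC2' : ((α^2-1)*(a 1+α)*(α*(α*(a 1)^2 + 2*a 1 + α)*v 0 + 2*α*(a 1 + α)*v 1
        + α*((a 1)^2 + 2*α*a 1 + 1)*v 2)) * (256*α^5*u^2*w^8) = 0 := by
      linear_combination (64*α^4*u^2*w^7*(a 1+α)) * g3
    have hC2 : (α^2-1)*(a 1+α)*(α*(α*(a 1)^2 + 2*a 1 + α)*v 0 + 2*α*(a 1 + α)*v 1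
        + α*((a 1)^2 + 2*α*a 1 + 1)*v 2) = 0 :=
      (mul_eq_zero.mp hC2').resolve_right
        (mul_ne_zero (mul_ne_zero (mul_ne_zero (by norm_num) (pow_ne_zero 5 hα0))
          (pow_ne_zero 2 hu)) (pow_ne_zero 8 hw))
    have hT3 : -2 * a 1 * (v 3 - a 3 * v 2) + v 2 + α * u * v 4 = 0 := by
      linear_combination α * hA - hB
    have hT1' : ((α^2-1)*(a 1+α)*(2*α*(a 1+α))) *
        (v 1 + a 1 * v 2 - (a 1 ^ 2 + 1) * (v 3 - a 3 * v 2) - u * v 4) = 0 := by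
      linear_combination hC2
        - ((α^2-1)*(a 1+α)*(α*(α*(a 1)^2 + 2*a 1 + α) + α^2*(1 - (a 1)^2))) * hA
        + ((α^2-1)*(a 1+α)*(α*(1 - (a 1)^2))) * hB
    have hne : ((α^2-1)*(a 1+α)*(2*α*(a 1+α))) ≠ 0 :=
      mul_ne_zero (mul_ne_zero (sub_ne_zero.2 hα1) ha)
        (mul_ne_zero (mul_ne_zero two_ne_zero hα0) ha)
    have hT1 : v 1 + a 1 * v 2 - (a 1 ^ 2 + 1) * (v 3 - a 3 * v 2) - u * v 4 = 0 :=
      (mul_eq_zero.mp hT1').resolve_left hne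
    have hT2 : (1 - a 1 ^ 2) * (v 3 - a 3 * v 2) + v 1 + a 1 * v 2 + v 0 = 0 := by
      linear_combination hT1 + hA
    exact ⟨hT1, hT2, hT3⟩

end
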